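/- Let ρ_χ(p) = p |Ψ⟩⟨Ψ| + (1−p) |00⟩⟨00|⊗(I₂/2) with |Ψ⟩ = cos(π/8)|000⟩ + sin(π/8)|111⟩, 0 < p ≤ 1, and let F_A = diag(x,1), F_B = diag(y,1), F_C = diag(z,1) with x, y, z > 0. Set N = ((2−√2)/4)p + ((1−p)/2)x²y² + ((2+√2 p)/4)x²y²z² and D = −((2−√2)/4)p − ((1−p)/2)x²y² + ((2+√2 p)/4)x²y²z². Then N = tr[(F_A⊗F_B⊗F_C) ρ_χ(p) (F_A⊗F_B⊗F_C)†], and the 3×9 matrix M̃ with entries M̃_{m,(l,n)} = tr[ρ_χ(p)(F_A σ_l F_A ⊗ F_B σ_m F_B ⊗ F_C σ_n F_C)] has exactly the nonzero entries M̃_{111} = (√2/2)pxyz, M̃_{122} = M̃_{212} = M̃_{221} = −(√2/2)pxyz, M̃_{333} = D (indices M̃_{lmn}), and the eigenvalues of M̃ M̃ᵀ are p²x²y²z², p²x²y²z², D²; hence the correlation matrix of the filtered state ρ' = (F_A⊗F_B⊗F_C) ρ_χ(p) (F_A⊗F_B⊗F_C)†/N has singular values pxyz/N, pxyz/N, |D|/N.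 -/

import Mathlib

set_option maxHeartbeats 4000000

open Matrix Polynomial
open scoped Kronecker ComplexOrder

/-- The Pauli matrices σ₁, σ₂, σ₃ (indexed by `Fin 3`). -/
noncomputable def pauli : Fin 3 → Matrix (Fin 2) (Fin 2) ℂ :=
  ![!![0, 1; 1, 0], !![0, -Complex.I; Complex.I, 0], !![1, 0; 0, -1]]

/-- The correlation matrix of a three-qubit state: `M_{j,(i,k)} = tr[ρ(σ_i⊗σ_j⊗σ_k)]`. -/
noncomputable def corrMat (ρ : Matrix (Fin 2 × Fin 2 × Fin 2) (Fin 2 × Fin 2 × Fin 2) ℂ) :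
    Matrix (Fin 3) (Fin 3 × Fin 3) ℝ :=
  fun j ik => ((ρ * (pauli ik.1 ⊗ₖ (pauli j ⊗ₖ pauli ik.2))).trace).re

/-- The vector `|Ψ⟩ = cos(π/8)|000⟩ + sin(π/8)|111⟩`. -/
noncomputable def psiChi : Fin 2 × Fin 2 × Fin 2 → ℂ :=
  fun x => if x = (0, 0, 0) then ((Real.cos (Real.pi / 8) : ℝ) : ℂ)
    else if x = (1, 1, 1) then ((Real.sin (Real.pi / 8) : ℝ) : ℂ) else 0

/-- The rank-one projector `|0⟩⟨0|`. -/
noncomputable def E00 : Matrix (Fin 2) (Fin 2) ℂ := !![1, 0; 0, 0]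

/-- The state `ρ_χ(p) = p|Ψ⟩⟨Ψ| + (1-p)|00⟩⟨00| ⊗ I₂/2`. -/
noncomputable def rhoChi (p : ℝ) :
    Matrix (Fin 2 × Fin 2 × Fin 2) (Fin 2 × Fin 2 × Fin 2) ℂ :=
  (p : ℂ) • Matrix.vecMulVec psiChi (star psiChi)
    + ((1 - p : ℝ) : ℂ) • (E00 ⊗ₖ (E00 ⊗ₖ (((2 : ℂ))⁻¹ • (1 : Matrix (Fin 2) (Fin 2) ℂ))))

/-- Key computation: the trace of `rhoChi p` against any elementary Kronecker product. -/
lemma trace_rhoChi_kron (p : ℝ) (A B C : Matrix (Fin 2) (Fin 2) ℂ) :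
    (rhoChi p * (A ⊗ₖ (B ⊗ₖ C))).trace =
      (p : ℂ) * (((Real.cos (Real.pi/8) : ℝ) : ℂ)^2 * A 0 0 * B 0 0 * C 0 0
        + ((Real.sin (Real.pi/8) : ℝ) : ℂ)^2 * A 1 1 * B 1 1 * C 1 1
        + ((Real.cos (Real.pi/8) : ℝ) : ℂ) * ((Real.sin (Real.pi/8) : ℝ) : ℂ)
            * (A 0 1 * B 0 1 * C 0 1 + A 1 0 * B 1 0 * C 1 0))
      + ((1 - p : ℝ) : ℂ)/2 * (A 0 0 * B 0 0 * (C 0 0 + C 1 1)) := by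
  simp only [rhoChi, Matrix.add_mul, Matrix.smul_mul, Matrix.trace_add, Matrix.trace_smul,
    Matrix.trace, Matrix.diag, Matrix.mul_apply, Fintype.sum_prod_type, Fin.sum_univ_two,
    Matrix.kroneckerMap_apply, Matrix.vecMulVec_apply, Pi.star_apply, E00, psiChi,
    Matrix.smul_apply, Matrix.one_apply, Matrix.cons_val_zero, Matrix.cons_val_one,
    Matrix.head_cons, Matrix.head_fin_const]
  norm_num [Matrix.vecMulVec_apply, psiChi, Prod.ext_iff, Complex.conj_ofReal]
  ring

/-- Conjugate transpose distributes over Kronecker products. -/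
lemma kron_conjT {m n : Type*} [Fintype m] [Fintype n]
    (A : Matrix m m ℂ) (B : Matrix n n ℂ) : (A ⊗ₖ B)ᴴ = Aᴴ ⊗ₖ Bᴴ := by
  ext ⟨i, j⟩ ⟨k, l⟩
  simp [Matrix.conjTranspose_apply, Matrix.kroneckerMap_apply, star_mul', mul_comm]

/-- Characteristic polynomial of a `3 × 3` diagonal matrix `diag(α, α, β)`. -/
lemma charpoly_diag3 (α β : ℝ) :
    (Matrix.diagonal ![α, α, β]).charpoly = (X - C α)^2 * (X - C β) := by
  rw [Matrix.charpoly, Matrix.det_fin_three]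
  simp only [charmatrix_apply, Matrix.diagonal_apply, Matrix.one_apply,
    Matrix.cons_val', Matrix.cons_val_zero, Matrix.cons_val_one, Matrix.head_cons,
    Matrix.head_fin_const, Matrix.cons_val_two, Matrix.tail_cons, Fin.isValue,
    show ((0:Fin 3) = 1) = False by simp [Fin.ext_iff],
    show ((0:Fin 3) = 2) = False by simp [Fin.ext_iff],
    show ((1:Fin 3) = 0) = False by simp [Fin.ext_iff],
    show ((1:Fin 3) = 2) = False by simp [Fin.ext_iff],
    show ((2:Fin 3) = 0) = False by simp [Fin.ext_iff],
    show ((2:Fin 3) = 1) = False by simp [Fin.ext_iff],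
    if_true, if_false, ite_false, ite_true, map_zero, eq_self_iff_true]
  ring

/-- Local filtering of `ρ_χ(p)` with filters `diag(x,1), diag(y,1), diag(z,1)`:
the normalization factor, the entries of the filtered matrix `M̃`, the eigenvalues of
`M̃ M̃ᵀ`, and the singular values of the correlation matrix of the filtered state. -/
theorem filtered_rhoChi (p x y z : ℝ) (hp0 : 0 < p) (hp1 : p ≤ 1)
    (hx : 0 < x) (hy : 0 < y) (hz : 0 < z)
    (FA FB FC : Matrix (Fin 2) (Fin 2) ℂ)
    (hFA : FA = Matrix.diagonal ![(x : ℂ), 1])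
    (hFB : FB = Matrix.diagonal ![(y : ℂ), 1])
    (hFC : FC = Matrix.diagonal ![(z : ℂ), 1])
    (N D : ℝ)
    (hNdef : N = (2 - Real.sqrt 2) / 4 * p + (1 - p) / 2 * (x ^ 2 * y ^ 2)
      + (2 + Real.sqrt 2 * p) / 4 * (x ^ 2 * y ^ 2 * z ^ 2))
    (hDdef : D = -((2 - Real.sqrt 2) / 4 * p) - (1 - p) / 2 * (x ^ 2 * y ^ 2)
      + (2 + Real.sqrt 2 * p) / 4 * (x ^ 2 * y ^ 2 * z ^ 2))
    (Mt : Matrix (Fin 3) (Fin 3 × Fin 3) ℝ)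
    (hMt : ∀ (m : Fin 3) (l n : Fin 3),
      Mt m (l, n) = ((rhoChi p * ((FA * pauli l * FA) ⊗ₖ
        ((FB * pauli m * FB) ⊗ₖ (FC * pauli n * FC)))).trace).re)
    (ρ' : Matrix (Fin 2 × Fin 2 × Fin 2) (Fin 2 × Fin 2 × Fin 2) ℂ)
    (hρ' : ρ' = ((N : ℂ))⁻¹ • ((FA ⊗ₖ (FB ⊗ₖ FC)) * rhoChi p * (FA ⊗ₖ (FB ⊗ₖ FC))ᴴ)) :
    ((FA ⊗ₖ (FB ⊗ₖ FC)) * rhoChi p * (FA ⊗ₖ (FB ⊗ₖ FC))ᴴ).trace = (N : ℂ)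
    ∧ (∀ l m n : Fin 3,
      Mt m (l, n) =
        if (l, m, n) = (0, 0, 0) then Real.sqrt 2 / 2 * (p * x * y * z)
        else if (l, m, n) = (0, 1, 1) ∨ (l, m, n) = (1, 0, 1) ∨ (l, m, n) = (1, 1, 0) then
          -(Real.sqrt 2 / 2 * (p * x * y * z))
        else if (l, m, n) = (2, 2, 2) then D
        else 0)
    ∧ (Mt * Mtᵀ).charpoly
        = (X - C (p ^ 2 * x ^ 2 * y ^ 2 * z ^ 2)) ^ 2 * (X - C (D ^ 2))
    ∧ (corrMat ρ' * (corrMat ρ')ᵀ).charpoly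
        = (X - C ((p * x * y * z / N) ^ 2)) ^ 2 * (X - C ((D / N) ^ 2)) := by
  have hs2 : Real.sqrt 2 ^ 2 = 2 := Real.sq_sqrt (by norm_num)
  have h2 : Real.sqrt 2 < 2 := by nlinarith [Real.sqrt_nonneg 2]
  have ha : Real.sqrt (2 + Real.sqrt 2) ^ 2 = 2 + Real.sqrt 2 := Real.sq_sqrt (by positivity)
  have hb : Real.sqrt (2 - Real.sqrt 2) ^ 2 = 2 - Real.sqrt 2 := Real.sq_sqrt (by linarith)
  have hab : Real.sqrt (2 + Real.sqrt 2) * Real.sqrt (2 - Real.sqrt 2) = Real.sqrt 2 := by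
    rw [← Real.sqrt_mul (by positivity)]
    congr 1; nlinarith [hs2]
  have hN0 : 0 < N := by
    have t1 : 0 < (2 - Real.sqrt 2) / 4 * p := by nlinarith
    have t2 : 0 ≤ (1 - p) / 2 * (x ^ 2 * y ^ 2) := by
      apply mul_nonneg (by linarith) (by positivity)
    have t3 : 0 < (2 + Real.sqrt 2 * p) / 4 * (x ^ 2 * y ^ 2 * z ^ 2) := by
      apply mul_pos _ (by positivity)
      nlinarith [Real.sqrt_nonneg 2]
    rw [hNdef]; linarith
  subst hFA hFB hFC hρ'
  -- the filter matrices are self-adjoint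
  have hdH : ∀ t : ℝ, (Matrix.diagonal ![(t:ℂ), 1])ᴴ = Matrix.diagonal ![(t:ℂ), 1] := by
    intro t
    ext i j
    fin_cases i <;> fin_cases j <;>
      simp [Matrix.conjTranspose_apply, Matrix.diagonal_apply, Complex.conj_ofReal]
  have hKH : ((Matrix.diagonal ![(x:ℂ),1]) ⊗ₖ ((Matrix.diagonal ![(y:ℂ),1]) ⊗ₖ (Matrix.diagonal ![(z:ℂ),1])))ᴴ
      = (Matrix.diagonal ![(x:ℂ),1]) ⊗ₖ ((Matrix.diagonal ![(y:ℂ),1]) ⊗ₖ (Matrix.diagonal ![(z:ℂ),1])) := by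
    rw [kron_conjT, kron_conjT, hdH, hdH, hdH]
  -- Part 2
  have h2v : ∀ l m n : Fin 3,
      Mt m (l, n) =
        if (l, m, n) = (0, 0, 0) then Real.sqrt 2 / 2 * (p * x * y * z)
        else if (l, m, n) = (0, 1, 1) ∨ (l, m, n) = (1, 0, 1) ∨ (l, m, n) = (1, 1, 0) then
          -(Real.sqrt 2 / 2 * (p * x * y * z))
        else if (l, m, n) = (2, 2, 2) then D
        else 0 := by
    intro l m n
    fin_cases l <;> fin_cases m <;> fin_cases n <;>
      rw [hMt, trace_rhoChi_kron] <;>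
      norm_num [pauli, Matrix.mul_apply, Fin.sum_univ_two, Matrix.diagonal, Complex.ext_iff,
        Prod.ext_iff, Fin.ext_iff (n := 3), hDdef] <;>
      first
        | linear_combination (p*x*y*z/2) * hab
        | linear_combination (-(p*x*y*z)/2) * hab
        | (simp only [div_pow, ← Complex.ofReal_pow, ha, hb]
           norm_num [Complex.div_re, Complex.ofReal_re, Complex.ofReal_im, Complex.normSq_apply]
           ring)
  -- Part 1
  have part1 : (((Matrix.diagonal ![(x:ℂ),1]) ⊗ₖ ((Matrix.diagonal ![(y:ℂ),1]) ⊗ₖ (Matrix.diagonal ![(z:ℂ),1])))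
      * rhoChi p
      * ((Matrix.diagonal ![(x:ℂ),1]) ⊗ₖ ((Matrix.diagonal ![(y:ℂ),1]) ⊗ₖ (Matrix.diagonal ![(z:ℂ),1])))ᴴ).trace = (N : ℂ) := by
    rw [hKH, Matrix.trace_mul_comm, ← Matrix.mul_assoc, Matrix.trace_mul_comm,
      ← Matrix.mul_kronecker_mul, ← Matrix.mul_kronecker_mul, trace_rhoChi_kron]
    norm_num [Matrix.mul_apply, Fin.sum_univ_two, Matrix.diagonal, Prod.ext_iff]
    simp only [div_pow, ← Complex.ofReal_pow, ha, hb]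
    rw [hNdef]
    push_cast
    ring
  -- Part 3: Mt * Mtᵀ is diagonal
  have hMM : Mt * Mtᵀ
      = Matrix.diagonal ![p^2*x^2*y^2*z^2, p^2*x^2*y^2*z^2, D^2] := by
    ext i j
    fin_cases i <;> fin_cases j <;>
      simp only [Matrix.mul_apply, Matrix.transpose_apply, Fintype.sum_prod_type,
        Fin.sum_univ_three] <;>
      simp only [h2v] <;>
      norm_num [Prod.ext_iff, Fin.ext_iff, Matrix.diagonal_apply] <;>
      first
        | linear_combination ((p*x*y*z)^2/2) * hs2
        | linear_combination (-((p*x*y*z)^2)/2) * hs2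
        | ring
  -- Part 4: the correlation matrix of the filtered state
  have hcorr : corrMat (((N : ℂ))⁻¹ •
        (((Matrix.diagonal ![(x:ℂ),1]) ⊗ₖ ((Matrix.diagonal ![(y:ℂ),1]) ⊗ₖ (Matrix.diagonal ![(z:ℂ),1])))
          * rhoChi p
          * ((Matrix.diagonal ![(x:ℂ),1]) ⊗ₖ ((Matrix.diagonal ![(y:ℂ),1]) ⊗ₖ (Matrix.diagonal ![(z:ℂ),1])))ᴴ))
      = N⁻¹ • Mt := by
    ext j ⟨i, k⟩
    set dA := Matrix.diagonal ![(x:ℂ),1]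
    set dB := Matrix.diagonal ![(y:ℂ),1]
    set dC := Matrix.diagonal ![(z:ℂ),1]
    set K := dA ⊗ₖ (dB ⊗ₖ dC) with hK
    simp only [corrMat, Matrix.smul_apply, smul_eq_mul, Matrix.smul_mul, Matrix.trace_smul,
      hMt]
    rw [hKH]
    have key : ((K * rhoChi p * K) * (pauli i ⊗ₖ (pauli j ⊗ₖ pauli k))).trace
        = (rhoChi p * ((dA * pauli i * dA) ⊗ₖ ((dB * pauli j * dB) ⊗ₖ (dC * pauli k * dC)))).trace := by
      calc ((K * rhoChi p * K) * (pauli i ⊗ₖ (pauli j ⊗ₖ pauli k))).trace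
          = ((K * rhoChi p) * (K * (pauli i ⊗ₖ (pauli j ⊗ₖ pauli k)))).trace := by
            rw [Matrix.mul_assoc]
        _ = ((K * (pauli i ⊗ₖ (pauli j ⊗ₖ pauli k))) * (K * rhoChi p)).trace :=
            Matrix.trace_mul_comm _ _
        _ = (((K * (pauli i ⊗ₖ (pauli j ⊗ₖ pauli k))) * K) * rhoChi p).trace := by
            rw [← Matrix.mul_assoc]
        _ = (rhoChi p * ((K * (pauli i ⊗ₖ (pauli j ⊗ₖ pauli k))) * K)).trace :=
            Matrix.trace_mul_comm _ _
        _ = (rhoChi p * ((dA * pauli i * dA) ⊗ₖ ((dB * pauli j * dB) ⊗ₖ (dC * pauli k * dC)))).trace := by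
            rw [hK, ← Matrix.mul_kronecker_mul, ← Matrix.mul_kronecker_mul,
              ← Matrix.mul_kronecker_mul, ← Matrix.mul_kronecker_mul]
    rw [key, ← Complex.ofReal_inv, Complex.re_ofReal_mul]
  have hsm : (N⁻¹ • Mt) * (N⁻¹ • Mt)ᵀ
      = Matrix.diagonal ![(p*x*y*z/N)^2, (p*x*y*z/N)^2, (D/N)^2] := by
    rw [Matrix.transpose_smul, Matrix.smul_mul, Matrix.mul_smul, hMM, smul_smul,
      ← Matrix.diagonal_smul]
    congr 1
    funext i
    fin_cases i <;> (simp; field_simp)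
  refine ⟨part1, h2v, ?_, ?_⟩
  · rw [hMM]; exact charpoly_diag3 _ _
  · rw [hcorr, hsm]; exact charpoly_diag3 _ _
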